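/- arXiv:1111.0897 — 4 statements merged into one kernel-verified Lean document; each statement's English description precedes it below -/
import Mathlib

section
/- Let m ≥ d ≥ 1 and let g : [0,1] → {0,1} be a union of at most m intervals. Then there exists a function h : [0,1] → {0,1} that is a union of at most d intervals such that the Lebesgue measure of {x ∈ [0,1] : g(x) ≠ h(x)} is at most (m − d)/m. -/
open MeasureTheory Set
open scoped ENNReal

/-- `f : [0,1] → {0,1}` is a union of at most `d` intervals: its `1`-set within `[0,1]`
is a union of at most `d` (closed) intervals. -/
def IsUnionOfIntervals (d : ℕ) (f : ℝ → Bool) : Prop :=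
  ∃ l u : Fin d → ℝ, ∀ x ∈ Set.Icc (0:ℝ) 1,
    (f x = true ↔ ∃ i, x ∈ Set.Icc (l i) (u i))

/-- Any union of at most `m` intervals is `(m−d)/m`-close to a union of at most
`d` intervals, whenever `1 ≤ d ≤ m`. -/
theorem unionOfIntervals_approx (m d : ℕ) (hd : 1 ≤ d) (hm : d ≤ m)
    (g : ℝ → Bool) (hg : IsUnionOfIntervals m g) :
    ∃ h : ℝ → Bool, IsUnionOfIntervals d h ∧
      volume {x ∈ Set.Icc (0:ℝ) 1 | g x ≠ h x} ≤
        ENNReal.ofReal (((m : ℝ) - d) / m) := by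
  classical
  obtain ⟨l, u, hlu⟩ := hg
  set t := m - d with ht
  have hcast : t + d = m := by omega
  set I : Fin m → Set ℝ := fun i => Icc (l i) (u i) with hI
  set P : Fin m → Set ℝ := fun i =>
    (I i ∩ Icc (0:ℝ) 1) \ ⋃ (j : Fin m) (_ : j < i), I j with hP
  set a : Fin m → ℝ≥0∞ := fun i => volume (P i) with ha
  set σ : Equiv.Perm (Fin m) := Tuple.sort a with hσ
  have hmono : Monotone (a ∘ σ) := Tuple.monotone_sort a
  set f : Fin d → Fin m := fun i => σ (Fin.cast hcast (Fin.natAdd t i)) with hf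
  set e : Fin t → Fin m := fun k => σ (Fin.cast hcast (Fin.castAdd d k)) with he
  set h : ℝ → Bool := fun x => decide (∃ i : Fin d, x ∈ Icc (l (f i)) (u (f i))) with hh
  have hhx : ∀ x, h x = true ↔ ∃ i : Fin d, x ∈ I (f i) := by
    intro x; simp [hh, hI]
  -- measurability of the pieces
  have hmeas : ∀ i, MeasurableSet (P i) := by
    intro i
    refine (measurableSet_Icc.inter measurableSet_Icc).diff ?_
    exact MeasurableSet.iUnion fun j => MeasurableSet.iUnion fun _ => measurableSet_Icc
  -- pieces are pairwise disjoint
  have hdisj : Pairwise (Function.onFun Disjoint P) := by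
    have key : ∀ i j : Fin m, i < j → Disjoint (P i) (P j) := by
      intro i j hij
      rw [Set.disjoint_left]
      intro x hxi hxj
      have hxIi : x ∈ I i := hxi.1.1
      exact hxj.2 (Set.mem_iUnion.2 ⟨i, Set.mem_iUnion.2 ⟨hij, hxIi⟩⟩)
    intro i j hij
    rcases hij.lt_or_gt with hlt | hlt
    · exact key i j hlt
    · exact (key j i hlt).symm
  -- total sum is at most 1
  have hsum_all : ∑ i, a i ≤ 1 := by
    have hU : volume (⋃ i, P i) = ∑' i, a i := measure_iUnion hdisj hmeas
    calc ∑ i, a i = volume (⋃ i, P i) := by rw [hU, tsum_fintype]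
      _ ≤ volume (Icc (0:ℝ) 1) := by
          refine measure_mono (Set.iUnion_subset fun i => ?_)
          exact Set.diff_subset.trans Set.inter_subset_right
      _ = 1 := by simp [Real.volume_Icc]
  -- the pivot index
  have htm : t < m := by omega
  set it : Fin m := ⟨t, htm⟩ with hit
  have hFsum : ∑ k : Fin t, a (e k) ≤ (t : ℝ≥0∞) * a (σ it) := by
    calc ∑ k : Fin t, a (e k) ≤ ∑ _k : Fin t, a (σ it) := by
          refine Finset.sum_le_sum fun k _ => ?_
          have : Fin.cast hcast (Fin.castAdd d k) ≤ it := by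
            have := k.isLt
            simp only [Fin.le_def, Fin.coe_cast, Fin.coe_castAdd, hit]
            omega
          exact hmono this
      _ = (t : ℝ≥0∞) * a (σ it) := by
          simp [Finset.sum_const, nsmul_eq_mul]
  have hRsum : (d : ℝ≥0∞) * a (σ it) ≤ ∑ i : Fin d, a (f i) := by
    calc (d : ℝ≥0∞) * a (σ it) = ∑ _i : Fin d, a (σ it) := by
          simp [Finset.sum_const, nsmul_eq_mul]
      _ ≤ ∑ i : Fin d, a (f i) := by
          refine Finset.sum_le_sum fun i _ => ?_
          have : it ≤ Fin.cast hcast (Fin.natAdd t i) := by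
            simp only [Fin.le_def, Fin.coe_cast, Fin.coe_natAdd, hit]
            omega
          exact hmono this
  have hsplit : (∑ k : Fin t, a (e k)) + (∑ i : Fin d, a (f i)) = ∑ i, a i := by
    have h1 : ∑ i : Fin m, a (σ i) = ∑ i, a i := Equiv.sum_comp σ a
    have h2 : ∑ j : Fin (t + d), a (σ (Fin.cast hcast j)) = ∑ i : Fin m, a (σ i) :=
      Fintype.sum_equiv (finCongr hcast) _ _ (fun j => rfl)
    rw [← h1, ← h2, Fin.sum_univ_add]
  -- the key bound : m * S_f ≤ t
  have hkey : (m : ℝ≥0∞) * ∑ k : Fin t, a (e k) ≤ (t : ℝ≥0∞) := by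
    have hmtd : (m : ℝ≥0∞) = (t : ℝ≥0∞) + (d : ℝ≥0∞) := by
      rw [← Nat.cast_add, hcast]
    calc (m : ℝ≥0∞) * ∑ k : Fin t, a (e k)
        = (t : ℝ≥0∞) * (∑ k : Fin t, a (e k)) + (d : ℝ≥0∞) * (∑ k : Fin t, a (e k)) := by
          rw [hmtd, add_mul]
      _ ≤ (t : ℝ≥0∞) * (∑ k : Fin t, a (e k)) + (d : ℝ≥0∞) * ((t : ℝ≥0∞) * a (σ it)) :=
          add_le_add_right (mul_le_mul_right hFsum _) _
      _ = (t : ℝ≥0∞) * (∑ k : Fin t, a (e k)) + (t : ℝ≥0∞) * ((d : ℝ≥0∞) * a (σ it)) := by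
          ring_nf
      _ ≤ (t : ℝ≥0∞) * (∑ k : Fin t, a (e k)) + (t : ℝ≥0∞) * (∑ i : Fin d, a (f i)) :=
          add_le_add_right (mul_le_mul_right hRsum _) _
      _ = (t : ℝ≥0∞) * ((∑ k : Fin t, a (e k)) + ∑ i : Fin d, a (f i)) := by rw [mul_add]
      _ ≤ (t : ℝ≥0∞) * 1 := mul_le_mul_right (hsplit ▸ hsum_all) _
      _ = (t : ℝ≥0∞) := mul_one _
  -- inclusion of the error set in the dropped pieces
  have hsub : {x ∈ Icc (0:ℝ) 1 | g x ≠ h x} ⊆ ⋃ k : Fin t, P (e k) := by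
    rintro x ⟨hx01, hgh⟩
    cases hhv : h x with
    | true =>
        obtain ⟨i, hi⟩ := (hhx x).1 hhv
        have hgx : g x = true := (hlu x hx01).2 ⟨f i, hi⟩
        exact absurd (hgx.trans hhv.symm) hgh
    | false =>
        have hgx : g x = true := by
          cases hgv : g x with
          | true => rfl
          | false => exact absurd (hgv.trans hhv.symm) hgh
        obtain ⟨j, hj⟩ := (hlu x hx01).1 hgx
        set s : Finset (Fin m) := Finset.univ.filter (fun i : Fin m => x ∈ I i) with hs
        have hsne : s.Nonempty := ⟨j, by
          simp only [hs, Finset.mem_filter, Finset.mem_univ, true_and]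
          exact hj⟩
        set i₀ : Fin m := s.min' hsne with hi₀
        have hxi₀ : x ∈ I i₀ := by
          have := s.min'_mem hsne
          simp only [hs, Finset.mem_filter] at this
          exact this.2
        have hxP : x ∈ P i₀ := by
          refine ⟨⟨hxi₀, hx01⟩, ?_⟩
          intro hmem
          obtain ⟨j', hj'⟩ := Set.mem_iUnion.1 hmem
          obtain ⟨hj'lt, hxj'⟩ := Set.mem_iUnion.1 hj'
          have : i₀ ≤ j' := s.min'_le j' (by simp [hs, hxj'])
          exact absurd this (not_le.2 hj'lt)
        set k : Fin m := σ.symm i₀ with hk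
        by_cases hkt : (k : ℕ) < t
        · refine Set.mem_iUnion.2 ⟨⟨(k : ℕ), hkt⟩, ?_⟩
          have hek : e ⟨(k : ℕ), hkt⟩ = i₀ := by
            have : Fin.cast hcast (Fin.castAdd d ⟨(k : ℕ), hkt⟩) = k := by
              apply Fin.ext; simp
            rw [he]; show σ _ = i₀; rw [this, hk, Equiv.apply_symm_apply]
          rw [hek]; exact hxP
        · exfalso
          push_neg at hkt
          have hkm : (k : ℕ) < m := k.isLt
          have hfi : f ⟨(k : ℕ) - t, by omega⟩ = i₀ := by
            have : Fin.cast hcast (Fin.natAdd t ⟨(k : ℕ) - t, by omega⟩) = k := by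
              apply Fin.ext; simp; omega
            rw [hf]; show σ _ = i₀; rw [this, hk, Equiv.apply_symm_apply]
          have : h x = true := (hhx x).2 ⟨⟨(k : ℕ) - t, by omega⟩, hfi ▸ hxi₀⟩
          rw [this] at hhv
          exact Bool.noConfusion hhv
  refine ⟨h, ⟨fun i => l (f i), fun i => u (f i), fun x _ => by simp [hh]⟩, ?_⟩
  have hbound : volume {x ∈ Icc (0:ℝ) 1 | g x ≠ h x} ≤ ∑ k : Fin t, a (e k) :=
    (measure_mono hsub).trans (measure_iUnion_fintype_le volume fun k => P (e k))
  have hdiv : volume {x ∈ Icc (0:ℝ) 1 | g x ≠ h x} ≤ (t : ℝ≥0∞) / (m : ℝ≥0∞) := by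
    refine hbound.trans ?_
    rw [ENNReal.le_div_iff_mul_le (Or.inl (by exact_mod_cast (by omega : m ≠ 0)))
      (Or.inl (ENNReal.natCast_ne_top m))]
    rw [mul_comm]; exact hkey
  have hofReal : ENNReal.ofReal (((m : ℝ) - d) / m) = (t : ℝ≥0∞) / (m : ℝ≥0∞) := by
    have hmd : ((m : ℝ) - d) = (t : ℝ) := by
      rw [ht]; push_cast [Nat.cast_sub hm]; ring
    rw [hmd, ENNReal.ofReal_div_of_pos (by exact_mod_cast (by omega : 0 < m)),
      ENNReal.ofReal_natCast, ENNReal.ofReal_natCast]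
  rw [hofReal]; exact hdiv
end

section
/- Let n ≥ 1, ε ∈ (0,1), and set τ = √(4n·log(4n/ε³)); assume τ ≤ √2·n. Let f : ℝⁿ → {−1,1} be measurable, let x, y be independent standard Gaussian vectors in ℝⁿ, and define g(x,y) = f(x)·f(y)·⟨x,y⟩ and its truncation g*(x,y) = g(x,y)·1[|⟨x,y⟩| ≤ τ]. Then |E[g] − E[g*]| ≤ ε³/2. -/
open MeasureTheory ProbabilityTheory
open scoped NNReal ENNReal

/-- The standard Gaussian measure `N(0, Iₙ)` on `ℝⁿ`. -/
noncomputable def stdGaussian (n : ℕ) : Measure (Fin n → ℝ) :=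
  Measure.pi fun _ => gaussianReal 0 1

namespace TruncAux

open Real

/-- Integral against the standard gaussian as a density integral. -/
lemma integral_gaussian_eq (g : ℝ → ℝ) :
    ∫ x, g x ∂(gaussianReal 0 1) = ∫ x, gaussianPDFReal 0 1 x * g x := by
  rw [gaussianReal_of_var_ne_zero 0 one_ne_zero]
  rw [show gaussianPDF 0 1
      = fun x => ((Real.toNNReal (gaussianPDFReal 0 1 x) : ℝ≥0) : ℝ≥0∞) from rfl]
  rw [integral_withDensity_eq_integral_smul (measurable_gaussianPDFReal 0 1).real_toNNReal g]
  congr 1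
  ext x
  rw [NNReal.smul_def, Real.coe_toNNReal _ (gaussianPDFReal_nonneg _ _ _), smul_eq_mul]

lemma integrable_gaussian_iff (g : ℝ → ℝ) :
    Integrable g (gaussianReal 0 1)
      ↔ Integrable (fun x => gaussianPDFReal 0 1 x * g x) volume := by
  rw [gaussianReal_of_var_ne_zero 0 one_ne_zero]
  rw [show gaussianPDF 0 1
      = fun x => ((Real.toNNReal (gaussianPDFReal 0 1 x) : ℝ≥0) : ℝ≥0∞) from rfl]
  rw [integrable_withDensity_iff_integrable_smul (measurable_gaussianPDFReal 0 1).real_toNNReal]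
  refine integrable_congr (ae_of_all _ fun x => ?_)
  dsimp only
  rw [NNReal.smul_def, Real.coe_toNNReal _ (gaussianPDFReal_nonneg _ _ _), smul_eq_mul]

lemma pdf_mul_exp (b x : ℝ) :
    gaussianPDFReal 0 1 x * Real.exp (b * x)
      = Real.exp (b ^ 2 / 2) * gaussianPDFReal b 1 x := by
  simp only [gaussianPDFReal, NNReal.coe_one, mul_one, sub_zero]
  have h : Real.exp (-x ^ 2 / 2) * Real.exp (b * x)
      = Real.exp (b ^ 2 / 2) * Real.exp (-(x - b) ^ 2 / 2) := by
    rw [← Real.exp_add, ← Real.exp_add]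
    congr 1
    ring
  linear_combination (Real.sqrt (2 * Real.pi))⁻¹ * h

lemma integrable_exp_mul (b : ℝ) :
    Integrable (fun x => Real.exp (b * x)) (gaussianReal 0 1) := by
  rw [integrable_gaussian_iff]
  have : (fun x => gaussianPDFReal 0 1 x * Real.exp (b * x))
      = fun x => Real.exp (b ^ 2 / 2) * gaussianPDFReal b 1 x := by
    ext x; exact pdf_mul_exp b x
  rw [this]
  exact (integrable_gaussianPDFReal b 1).const_mul _

lemma integral_exp_mul (b : ℝ) :
    ∫ x, Real.exp (b * x) ∂(gaussianReal 0 1) = Real.exp (b ^ 2 / 2) := by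
  rw [integral_gaussian_eq]
  simp_rw [pdf_mul_exp]
  rw [integral_const_mul, integral_gaussianPDFReal_eq_one b one_ne_zero, mul_one]

lemma pdf_mul_exp_sq {c : ℝ} (hc : c < 1 / 2) (x : ℝ) :
    gaussianPDFReal 0 1 x * Real.exp (c * x ^ 2)
      = (Real.sqrt (1 - 2 * c))⁻¹
        * gaussianPDFReal 0 (Real.toNNReal (1 - 2 * c)⁻¹) x := by
  have hs : (0 : ℝ) < 1 - 2 * c := by linarith
  have hs' : (0 : ℝ) ≤ (1 - 2 * c)⁻¹ := by positivity
  simp only [gaussianPDFReal, NNReal.coe_one, mul_one, sub_zero,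
    Real.coe_toNNReal _ hs']
  have hsqrt : Real.sqrt (2 * Real.pi * (1 - 2 * c)⁻¹)
      = Real.sqrt (2 * Real.pi) * (Real.sqrt (1 - 2 * c))⁻¹ := by
    rw [Real.sqrt_mul (by positivity), Real.sqrt_inv]
  rw [hsqrt]
  have h : Real.exp (-x ^ 2 / 2) * Real.exp (c * x ^ 2)
      = Real.exp (-x ^ 2 / (2 * (1 - 2 * c)⁻¹)) := by
    rw [← Real.exp_add]
    congr 1
    field_simp
    ring
  have hx : (Real.sqrt (2 * Real.pi) * (Real.sqrt (1 - 2 * c))⁻¹)⁻¹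
      = (Real.sqrt (2 * Real.pi))⁻¹ * Real.sqrt (1 - 2 * c) := by
    rw [mul_inv, inv_inv]
  rw [hx]
  have h2 : (Real.sqrt (1 - 2 * c))⁻¹ * Real.sqrt (1 - 2 * c) = 1 := by
    rw [inv_mul_cancel₀ (by positivity)]
  calc (Real.sqrt (2 * Real.pi))⁻¹ * Real.exp (-x ^ 2 / 2) * Real.exp (c * x ^ 2)
      = (Real.sqrt (2 * Real.pi))⁻¹ * (Real.exp (-x ^ 2 / 2) * Real.exp (c * x ^ 2)) := by ring
    _ = (Real.sqrt (2 * Real.pi))⁻¹ * Real.exp (-x ^ 2 / (2 * (1 - 2 * c)⁻¹)) := by rw [h]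
    _ = (Real.sqrt (1 - 2 * c))⁻¹
        * ((Real.sqrt (2 * Real.pi))⁻¹ * Real.sqrt (1 - 2 * c)
          * Real.exp (-x ^ 2 / (2 * (1 - 2 * c)⁻¹))) := by
      field_simp
  
lemma toNNReal_ne_zero {c : ℝ} (hc : c < 1 / 2) :
    Real.toNNReal (1 - 2 * c)⁻¹ ≠ 0 := by
  have hs : (0 : ℝ) < 1 - 2 * c := by linarith
  simp only [ne_eq, Real.toNNReal_eq_zero, not_le]
  positivity

lemma integrable_exp_sq {c : ℝ} (hc : c < 1 / 2) :
    Integrable (fun x => Real.exp (c * x ^ 2)) (gaussianReal 0 1) := by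
  rw [integrable_gaussian_iff]
  have : (fun x => gaussianPDFReal 0 1 x * Real.exp (c * x ^ 2))
      = fun x => (Real.sqrt (1 - 2 * c))⁻¹
          * gaussianPDFReal 0 (Real.toNNReal (1 - 2 * c)⁻¹) x := by
    ext x; exact pdf_mul_exp_sq hc x
  rw [this]
  exact (integrable_gaussianPDFReal _ _).const_mul _

lemma integral_exp_sq {c : ℝ} (hc : c < 1 / 2) :
    ∫ x, Real.exp (c * x ^ 2) ∂(gaussianReal 0 1) = (Real.sqrt (1 - 2 * c))⁻¹ := by
  rw [integral_gaussian_eq]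
  simp_rw [pdf_mul_exp_sq hc]
  rw [integral_const_mul, integral_gaussianPDFReal_eq_one 0 (toNNReal_ne_zero hc), mul_one]

section PiProd

noncomputable local instance (priority := 2000) gmeas : MeasureSpace ℝ :=
  ⟨gaussianReal 0 1⟩

noncomputable local instance : IsProbabilityMeasure (volume : Measure ℝ) :=
  inferInstanceAs (IsProbabilityMeasure (gaussianReal 0 1))

noncomputable local instance : SigmaFinite (volume : Measure ℝ) :=
  inferInstanceAs (SigmaFinite (gaussianReal 0 1))

noncomputable instance (n : ℕ) : IsProbabilityMeasure (stdGaussian n) :=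
  inferInstanceAs (IsProbabilityMeasure (Measure.pi fun _ : Fin n => gaussianReal 0 1))

noncomputable instance (n : ℕ) : SFinite (stdGaussian n) := by
  have : IsFiniteMeasure (stdGaussian n) :=
    inferInstanceAs (IsFiniteMeasure (Measure.pi fun _ : Fin n => gaussianReal 0 1))
  infer_instance

variable (n : ℕ)

lemma measurable_inner_sum :
    Measurable (fun p : (Fin n → ℝ) × (Fin n → ℝ) => ∑ i, p.1 i * p.2 i) :=
  Finset.measurable_sum _ fun i _ =>
    ((measurable_pi_apply i).comp measurable_fst).mul
      ((measurable_pi_apply i).comp measurable_snd)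

lemma exp_inner_eq (c : ℝ) (p : (Fin n → ℝ) × (Fin n → ℝ)) :
    Real.exp (c * ∑ i, p.1 i * p.2 i) = ∏ i, Real.exp (c * p.1 i * p.2 i) := by
  rw [← Real.exp_sum]
  congr 1
  rw [Finset.mul_sum]
  exact Finset.sum_congr rfl fun i _ => by ring

lemma inner_y_integrable (c : ℝ) (x : Fin n → ℝ) :
    Integrable (fun y : Fin n → ℝ => ∏ i, Real.exp (c * x i * y i)) (stdGaussian n) :=
  Integrable.fintype_prod (f := fun i t => Real.exp (c * x i * t))
    fun i => integrable_exp_mul (c * x i)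

lemma inner_y_integral (c : ℝ) (x : Fin n → ℝ) :
    ∫ y, ∏ i, Real.exp (c * x i * y i) ∂(stdGaussian n)
      = ∏ i, Real.exp (c ^ 2 / 2 * x i ^ 2) := by
  rw [show (∫ y, ∏ i, Real.exp (c * x i * y i) ∂(stdGaussian n))
      = ∫ y : Fin n → ℝ, ∏ i, (fun i t => Real.exp (c * x i * t)) i (y i) from rfl]
  rw [MeasureTheory.integral_fin_nat_prod_volume_eq_prod (fun i t => Real.exp (c * x i * t))]
  exact Finset.prod_congr rfl fun i _ => by
    rw [show (∫ t : ℝ, Real.exp (c * x i * t))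
        = ∫ t, Real.exp (c * x i * t) ∂(gaussianReal 0 1) from rfl]
    rw [integral_exp_mul (c * x i)]
    congr 1
    ring

lemma outer_x_integrable {c : ℝ} (hc : c ^ 2 < 1) :
    Integrable (fun x : Fin n → ℝ => ∏ i, Real.exp (c ^ 2 / 2 * x i ^ 2))
      (stdGaussian n) :=
  Integrable.fintype_prod (f := fun _ t => Real.exp (c ^ 2 / 2 * t ^ 2))
    fun _ => integrable_exp_sq (by linarith)

lemma outer_x_integral {c : ℝ} (hc : c ^ 2 < 1) :
    ∫ x, ∏ i, Real.exp (c ^ 2 / 2 * x i ^ 2) ∂(stdGaussian n)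
      = ((Real.sqrt (1 - c ^ 2))⁻¹) ^ n := by
  rw [show (∫ x, ∏ i, Real.exp (c ^ 2 / 2 * x i ^ 2) ∂(stdGaussian n))
      = ∫ x : Fin n → ℝ, ∏ i, (fun (_ : Fin n) t => Real.exp (c ^ 2 / 2 * t ^ 2)) i (x i)
      from rfl]
  rw [MeasureTheory.integral_fin_nat_prod_volume_eq_prod
    (fun (_ : Fin n) t => Real.exp (c ^ 2 / 2 * t ^ 2))]
  rw [Finset.prod_const]
  rw [show (∫ t : ℝ, Real.exp (c ^ 2 / 2 * t ^ 2))
      = ∫ t, Real.exp (c ^ 2 / 2 * t ^ 2) ∂(gaussianReal 0 1) from rfl]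
  rw [integral_exp_sq (show c ^ 2 / 2 < 1 / 2 by linarith)]
  congr 2
  · ring_nf
  · simp

lemma integrable_exp_inner {c : ℝ} (hc : c ^ 2 < 1) :
    Integrable (fun p : (Fin n → ℝ) × (Fin n → ℝ) => Real.exp (c * ∑ i, p.1 i * p.2 i))
      ((stdGaussian n).prod (stdGaussian n)) := by
  have hmeas : AEStronglyMeasurable
      (fun p : (Fin n → ℝ) × (Fin n → ℝ) => Real.exp (c * ∑ i, p.1 i * p.2 i))
      ((stdGaussian n).prod (stdGaussian n)) :=
    ((measurable_inner_sum n).const_mul c).exp.aestronglyMeasurable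
  rw [MeasureTheory.integrable_prod_iff hmeas]
  constructor
  · refine ae_of_all _ fun x => ?_
    have : (fun y : Fin n → ℝ => Real.exp (c * ∑ i, (x, y).1 i * (x, y).2 i))
        = fun y : Fin n → ℝ => ∏ i, Real.exp (c * x i * y i) := by
      ext y; exact exp_inner_eq n c (x, y)
    rw [this]
    exact inner_y_integrable n c x
  · have : (fun x : Fin n → ℝ =>
        ∫ y, ‖Real.exp (c * ∑ i, (x, y).1 i * (x, y).2 i)‖ ∂(stdGaussian n))
        = fun x : Fin n → ℝ => ∏ i, Real.exp (c ^ 2 / 2 * x i ^ 2) := by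
      ext x
      rw [show (fun y : Fin n → ℝ => ‖Real.exp (c * ∑ i, (x, y).1 i * (x, y).2 i)‖)
          = fun y : Fin n → ℝ => ∏ i, Real.exp (c * x i * y i) by
        ext y
        rw [Real.norm_eq_abs, abs_of_pos (Real.exp_pos _)]
        exact exp_inner_eq n c (x, y)]
      exact inner_y_integral n c x
    rw [this]
    exact outer_x_integrable n hc

lemma integral_exp_inner {c : ℝ} (hc : c ^ 2 < 1) :
    ∫ p, Real.exp (c * ∑ i, p.1 i * p.2 i) ∂((stdGaussian n).prod (stdGaussian n))
      = ((Real.sqrt (1 - c ^ 2))⁻¹) ^ n := by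
  rw [MeasureTheory.integral_prod _ (integrable_exp_inner n hc)]
  rw [show (fun x : Fin n → ℝ =>
      ∫ y, Real.exp (c * ∑ i, (x, y).1 i * (x, y).2 i) ∂(stdGaussian n))
      = fun x : Fin n → ℝ => ∏ i, Real.exp (c ^ 2 / 2 * x i ^ 2) from
    funext fun x => by
      rw [show (fun y : Fin n → ℝ => Real.exp (c * ∑ i, (x, y).1 i * (x, y).2 i))
          = fun y : Fin n → ℝ => ∏ i, Real.exp (c * x i * y i) from
        funext fun y => exp_inner_eq n c (x, y)]
      exact inner_y_integral n c x]
  exact outer_x_integral n hc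

end PiProd

end TruncAux

set_option maxHeartbeats 1000000 in
open TruncAux in
/-- Truncating `g(x,y) = f(x)·f(y)·⟨x,y⟩` at `|⟨x,y⟩| ≤ τ`, with
`τ = √(4n·log(4n/ε³)) ≤ √2·n`, changes the expectation by at most `ε³/2`. -/
theorem truncation_error (n : ℕ) (hn : 1 ≤ n) (ε : ℝ) (hε : ε ∈ Set.Ioo (0:ℝ) 1)
    (τ : ℝ) (hτ : τ = Real.sqrt (4 * n * Real.log (4 * n / ε ^ 3)))
    (hτ' : τ ≤ Real.sqrt 2 * n)
    (f : (Fin n → ℝ) → ℝ) (hf : Measurable f) (hf' : ∀ x, f x = -1 ∨ f x = 1) :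
    |(∫ p : (Fin n → ℝ) × (Fin n → ℝ),
        f p.1 * f p.2 * (∑ i, p.1 i * p.2 i)
        ∂((stdGaussian n).prod (stdGaussian n))) -
      (∫ p : (Fin n → ℝ) × (Fin n → ℝ),
        (if |∑ i, p.1 i * p.2 i| ≤ τ then f p.1 * f p.2 * (∑ i, p.1 i * p.2 i) else 0)
        ∂((stdGaussian n).prod (stdGaussian n)))| ≤ ε ^ 3 / 2 := by
  obtain ⟨hε0, hε1⟩ := hε
  have hN : (1:ℝ) ≤ (n:ℝ) := by exact_mod_cast hn
  have hN0 : (0:ℝ) < n := by linarith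
  have hε3 : 0 < ε ^ 3 := by positivity
  have hε3' : ε ^ 3 < 1 := pow_lt_one₀ hε0.le hε1 (by norm_num)
  have hq0 : (0:ℝ) < 4 * n / ε ^ 3 := by positivity
  have hq4 : (4:ℝ) ≤ 4 * n / ε ^ 3 := by
    rw [le_div_iff₀ hε3]; linarith [hε3', hN]
  set L := Real.log (4 * ↑n / ε ^ 3) with hL
  have hlog2 : (0.6931471803:ℝ) < Real.log 2 := Real.log_two_gt_d9
  have hL4 : Real.log 4 ≤ L := Real.log_le_log (by norm_num) hq4
  have hlog4 : Real.log 4 = 2 * Real.log 2 := by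
    rw [show (4:ℝ) = 2 ^ 2 by norm_num, Real.log_pow]; push_cast; ring
  have hL1 : 1 ≤ L := by rw [hlog4] at hL4; linarith
  have hL0 : 0 < L := by linarith
  have hτ2 : τ ^ 2 = 4 * n * L := by
    rw [hτ, Real.sq_sqrt (by positivity)]
  have hτ0 : 0 < τ := by
    rw [hτ]; exact Real.sqrt_pos.2 (by positivity)
  have hLn : L ≤ (n:ℝ) / 2 := by
    have h2 : τ ^ 2 ≤ 2 * (n:ℝ) ^ 2 := by
      have hs2 : (Real.sqrt 2 * n) ^ 2 = 2 * (n:ℝ) ^ 2 := by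
        rw [mul_pow, Real.sq_sqrt (by norm_num)]
      calc τ ^ 2 ≤ (Real.sqrt 2 * n) ^ 2 := pow_le_pow_left₀ hτ0.le hτ' 2
        _ = 2 * (n:ℝ) ^ 2 := hs2
    have h3 : 4 * (n:ℝ) * L ≤ 4 * n * (n / 2) := by
      rw [← hτ2]; linarith
    exact le_of_mul_le_mul_left h3 (by positivity)
  set m := τ / (2 * n) with hm
  have hm0 : 0 < m := by rw [hm]; positivity
  have hNne : (n:ℝ) ≠ 0 := ne_of_gt hN0
  have hmτ : m * τ = 2 * L := by
    rw [hm]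
    field_simp
    linear_combination hτ2
  have hmsq : m ^ 2 = L / n := by
    rw [hm, div_pow, hτ2]
    field_simp
    ring
  have hm1 : m ^ 2 < 1 := by rw [hmsq, div_lt_one hN0]; linarith
  have hm1' : (-m) ^ 2 < 1 := by rwa [neg_sq]
  have hεL : ε ^ 3 = 4 * n * Real.exp (-L) := by
    rw [Real.exp_neg, hL, Real.exp_log hq0]
    field_simp
  set C := τ * Real.exp (-(2 * L)) with hC
  have hC0 : 0 < C := by rw [hC]; positivity
  -- numeric bound
  set x := L / (n:ℝ) with hx
  have hx0 : 0 ≤ x := by rw [hx]; positivity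
  have hx2 : x ≤ 1 / 2 := by rw [hx, div_le_iff₀ hN0]; linarith
  have h1x : 0 < 1 - x := by linarith
  have hquad : 1 + (x + x ^ 2) + (x + x ^ 2) ^ 2 / 2 ≤ Real.exp (x + x ^ 2) :=
    Real.quadratic_le_exp_of_nonneg (by positivity)
  have hkey : Real.exp (-(x + x ^ 2)) ≤ 1 - x := by
    rw [Real.exp_neg, inv_eq_one_div, div_le_iff₀ (Real.exp_pos _)]
    have hmul : (1 - x) * (1 + (x + x ^ 2) + (x + x ^ 2) ^ 2 / 2)
        ≤ (1 - x) * Real.exp (x + x ^ 2) :=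
      mul_le_mul_of_nonneg_left hquad h1x.le
    have e1 : x ^ 2 ≤ x / 2 := by
      have h := mul_le_mul_of_nonneg_left hx2 hx0
      calc x ^ 2 = x * x := sq x
        _ ≤ x * (1 / 2) := h
        _ = x / 2 := by ring
    have e2 : x ^ 3 ≤ x / 4 := by
      have h := mul_le_mul_of_nonneg_left e1 hx0
      calc x ^ 3 = x * x ^ 2 := by ring
        _ ≤ x * (x / 2) := h
        _ = x ^ 2 / 2 := by ring
        _ ≤ x / 2 / 2 := by linarith [e1]
        _ = x / 4 := by ring
    have h8 : 0 ≤ 1 - x - x ^ 2 - x ^ 3 := by linarith [e1, e2, hx2]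
    have hid : (1 - x) * (1 + (x + x ^ 2) + (x + x ^ 2) ^ 2 / 2)
        = 1 + x ^ 2 * (1 - x - x ^ 2 - x ^ 3) / 2 := by ring
    have hpoly : 1 ≤ (1 - x) * (1 + (x + x ^ 2) + (x + x ^ 2) ^ 2 / 2) := by
      rw [hid]
      linarith [mul_nonneg (sq_nonneg x) h8]
    linarith [hmul, hpoly]
  have hsqrt1 : Real.exp (-(x + x ^ 2) / 2) ≤ Real.sqrt (1 - x) := by
    rw [show (-(x + x ^ 2) / 2 : ℝ) = (-(x + x ^ 2)) / 2 by ring, Real.exp_half]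
    exact Real.sqrt_le_sqrt hkey
  have hstep1 : (Real.sqrt (1 - m ^ 2))⁻¹ ≤ Real.exp ((x + x ^ 2) / 2) := by
    rw [hmsq]
    have h0 : 0 < Real.exp (-(x + x ^ 2) / 2) := Real.exp_pos _
    calc (Real.sqrt (1 - x))⁻¹ ≤ (Real.exp (-(x + x ^ 2) / 2))⁻¹ :=
          inv_anti₀ h0 hsqrt1
      _ = Real.exp ((x + x ^ 2) / 2) := by
          rw [← Real.exp_neg]; congr 1; ring
  have hstep2 : ((Real.sqrt (1 - m ^ 2))⁻¹) ^ n ≤ Real.exp (3 * L / 4) := by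
    calc ((Real.sqrt (1 - m ^ 2))⁻¹) ^ n ≤ (Real.exp ((x + x ^ 2) / 2)) ^ n :=
          pow_le_pow_left₀ (by positivity) hstep1 n
      _ = Real.exp (n * ((x + x ^ 2) / 2)) := (Real.exp_nat_mul _ n).symm
      _ ≤ Real.exp (3 * L / 4) := by
          apply Real.exp_le_exp.2
          have h1 : (n:ℝ) * x = L := by rw [hx]; field_simp
          have h2 : (n:ℝ) * x ^ 2 = L * x := by rw [hx]; field_simp
          have h3 : L * x ≤ L * (1 / 2) := mul_le_mul_of_nonneg_left hx2 hL0.le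
          have h4 : (n:ℝ) * ((x + x ^ 2) / 2) = ((n:ℝ) * x) / 2 + ((n:ℝ) * x ^ 2) / 2 := by
            ring
          rw [h4, h1, h2]
          linarith [h3]
  have hstep3 : τ ≤ n * Real.exp (L / 4) := by
    have hs2 : Real.sqrt 2 ≤ Real.exp (L / 4) := by
      have hlogs : Real.log (Real.sqrt 2) = Real.log 2 / 2 := Real.log_sqrt (by norm_num)
      have : Real.sqrt 2 = Real.exp (Real.log 2 / 2) := by
        rw [← hlogs, Real.exp_log (Real.sqrt_pos.2 (by norm_num))]
      rw [this]
      apply Real.exp_le_exp.2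
      rw [hlog4] at hL4; linarith
    calc τ ≤ Real.sqrt 2 * n := hτ'
      _ ≤ Real.exp (L / 4) * n := mul_le_mul_of_nonneg_right hs2 hN0.le
      _ = n * Real.exp (L / 4) := by ring
  have hnum : 2 * C * ((Real.sqrt (1 - m ^ 2))⁻¹) ^ n ≤ ε ^ 3 / 2 := by
    have hchain : 2 * C * ((Real.sqrt (1 - m ^ 2))⁻¹) ^ n
        ≤ 2 * ((n * Real.exp (L / 4)) * Real.exp (-(2 * L))) * Real.exp (3 * L / 4) := by
      rw [hC]
      gcongr
    have heq : 2 * ((n * Real.exp (L / 4)) * Real.exp (-(2 * L))) * Real.exp (3 * L / 4)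
        = 2 * n * Real.exp (-L) := by
      rw [show 2 * (((n:ℝ) * Real.exp (L / 4)) * Real.exp (-(2 * L))) * Real.exp (3 * L / 4)
          = 2 * n * (Real.exp (L / 4) * Real.exp (-(2 * L)) * Real.exp (3 * L / 4)) by ring,
        ← Real.exp_add, ← Real.exp_add,
        show L / 4 + -(2 * L) + 3 * L / 4 = -L by ring]
    rw [hεL]
    calc 2 * C * ((Real.sqrt (1 - m ^ 2))⁻¹) ^ n
        ≤ 2 * ((n * Real.exp (L / 4)) * Real.exp (-(2 * L))) * Real.exp (3 * L / 4) := hchain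
      _ = 2 * n * Real.exp (-L) := heq
      _ = 4 * n * Real.exp (-L) / 2 := by ring
  -- measure-theoretic part
  set P := (stdGaussian n).prod (stdGaussian n) with hP
  have hZme : Measurable (fun p : (Fin n → ℝ) × (Fin n → ℝ) => ∑ i, p.1 i * p.2 i) :=
    measurable_inner_sum n
  have habsf : ∀ y, |f y| = 1 := fun y => by rcases hf' y with h | h <;> simp [h]
  have hinth : Integrable (fun p : (Fin n → ℝ) × (Fin n → ℝ) =>
      C * Real.exp (m * ∑ i, p.1 i * p.2 i) + C * Real.exp (-m * ∑ i, p.1 i * p.2 i)) P :=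
    ((integrable_exp_inner n hm1).const_mul C).add
      ((integrable_exp_inner n hm1').const_mul C)
  have hinthval : ∫ p, (C * Real.exp (m * ∑ i, p.1 i * p.2 i)
        + C * Real.exp (-m * ∑ i, p.1 i * p.2 i)) ∂P
      = 2 * C * ((Real.sqrt (1 - m ^ 2))⁻¹) ^ n := by
    rw [integral_add ((integrable_exp_inner n hm1).const_mul C)
      ((integrable_exp_inner n hm1').const_mul C), integral_const_mul, integral_const_mul,
      integral_exp_inner n hm1, integral_exp_inner n hm1', neg_sq]
    ring
  have hh0 : ∀ p : (Fin n → ℝ) × (Fin n → ℝ),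
      0 ≤ C * Real.exp (m * ∑ i, p.1 i * p.2 i) + C * Real.exp (-m * ∑ i, p.1 i * p.2 i) :=
    fun p => by positivity
  have hpt : ∀ p : (Fin n → ℝ) × (Fin n → ℝ), τ < |∑ i, p.1 i * p.2 i| →
      |∑ i, p.1 i * p.2 i|
        ≤ C * Real.exp (m * ∑ i, p.1 i * p.2 i) + C * Real.exp (-m * ∑ i, p.1 i * p.2 i) := by
    intro p hzp
    set z := ∑ i, p.1 i * p.2 i with hz
    have h1 : Real.exp (m * |z|) ≤ Real.exp (m * z) + Real.exp (-m * z) := by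
      rcases abs_cases z with ⟨he, _⟩ | ⟨he, _⟩
      · rw [he]; linarith [Real.exp_pos (-m * z)]
      · rw [he, show m * -z = -m * z by ring]; linarith [Real.exp_pos (m * z)]
    have h2 : |z| ≤ C * Real.exp (m * |z|) := by
      have hCexp : C * Real.exp (m * |z|) = τ * Real.exp (m * (|z| - τ)) := by
        rw [hC, mul_assoc, ← Real.exp_add]
        congr 1
        rw [mul_sub, hmτ]
        ring
      have hexp1 : m * (|z| - τ) + 1 ≤ Real.exp (m * (|z| - τ)) := Real.add_one_le_exp _
      rw [hCexp]
      have hfac : 0 ≤ (m * τ - 1) * (|z| - τ) :=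
        mul_nonneg (by linarith [hmτ]) (by linarith [hzp])
      have hmul2 : τ * (m * (|z| - τ) + 1) ≤ τ * Real.exp (m * (|z| - τ)) :=
        mul_le_mul_of_nonneg_left hexp1 hτ0.le
      have hexpand : τ * (m * (|z| - τ) + 1) = (m * τ - 1) * (|z| - τ) + |z| := by ring
      linarith [hfac, hmul2, hexpand.symm.le, hexpand.le]
    calc |z| ≤ C * Real.exp (m * |z|) := h2
      _ ≤ C * (Real.exp (m * z) + Real.exp (-m * z)) := by
          exact mul_le_mul_of_nonneg_left h1 hC0.le
      _ = C * Real.exp (m * z) + C * Real.exp (-m * z) := by ring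
  have hgme : Measurable (fun p : (Fin n → ℝ) × (Fin n → ℝ) =>
      f p.1 * f p.2 * ∑ i, p.1 i * p.2 i) :=
    ((hf.comp measurable_fst).mul (hf.comp measurable_snd)).mul hZme
  have habsg : ∀ p : (Fin n → ℝ) × (Fin n → ℝ),
      |f p.1 * f p.2 * ∑ i, p.1 i * p.2 i| = |∑ i, p.1 i * p.2 i| := fun p => by
    rw [abs_mul, abs_mul, habsf, habsf, one_mul, one_mul]
  have hintg : Integrable (fun p : (Fin n → ℝ) × (Fin n → ℝ) =>
      f p.1 * f p.2 * ∑ i, p.1 i * p.2 i) P := by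
    refine Integrable.mono' (hinth.add (integrable_const τ))
      hgme.aestronglyMeasurable (ae_of_all _ fun p => ?_)
    rw [Real.norm_eq_abs, habsg]
    rcases le_or_gt |∑ i, p.1 i * p.2 i| τ with hcase | hcase
    · have := hh0 p
      simp only [Pi.add_apply]
      linarith
    · have := hpt p hcase
      simp only [Pi.add_apply]
      linarith
  have hg'me : Measurable (fun p : (Fin n → ℝ) × (Fin n → ℝ) =>
      if |∑ i, p.1 i * p.2 i| ≤ τ then f p.1 * f p.2 * ∑ i, p.1 i * p.2 i else 0) :=
    Measurable.ite (measurableSet_le hZme.abs measurable_const) hgme measurable_const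
  have hintg' : Integrable (fun p : (Fin n → ℝ) × (Fin n → ℝ) =>
      if |∑ i, p.1 i * p.2 i| ≤ τ then f p.1 * f p.2 * ∑ i, p.1 i * p.2 i else 0) P := by
    refine Integrable.mono' (integrable_const τ)
      hg'me.aestronglyMeasurable (ae_of_all _ fun p => ?_)
    rw [Real.norm_eq_abs]
    rcases le_or_gt |∑ i, p.1 i * p.2 i| τ with hcase | hcase
    · rw [if_pos hcase, habsg]; exact hcase
    · rw [if_neg (not_le.2 hcase), abs_zero]; exact hτ0.le
  have hptfull : ∀ p : (Fin n → ℝ) × (Fin n → ℝ),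
      |(f p.1 * f p.2 * ∑ i, p.1 i * p.2 i)
          - (if |∑ i, p.1 i * p.2 i| ≤ τ then f p.1 * f p.2 * ∑ i, p.1 i * p.2 i else 0)|
        ≤ C * Real.exp (m * ∑ i, p.1 i * p.2 i) + C * Real.exp (-m * ∑ i, p.1 i * p.2 i) := by
    intro p
    rcases le_or_gt |∑ i, p.1 i * p.2 i| τ with hcase | hcase
    · rw [if_pos hcase, sub_self, abs_zero]
      exact hh0 p
    · rw [if_neg (not_le.2 hcase), sub_zero, habsg]
      exact hpt p hcase
  calc |(∫ p : (Fin n → ℝ) × (Fin n → ℝ), f p.1 * f p.2 * ∑ i, p.1 i * p.2 i ∂P) -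
        ∫ p : (Fin n → ℝ) × (Fin n → ℝ),
          (if |∑ i, p.1 i * p.2 i| ≤ τ then f p.1 * f p.2 * ∑ i, p.1 i * p.2 i else 0) ∂P|
      = |∫ p : (Fin n → ℝ) × (Fin n → ℝ),
          (f p.1 * f p.2 * ∑ i, p.1 i * p.2 i
            - if |∑ i, p.1 i * p.2 i| ≤ τ then f p.1 * f p.2 * ∑ i, p.1 i * p.2 i else 0) ∂P| := by
        rw [integral_sub hintg hintg']
    _ ≤ ∫ p : (Fin n → ℝ) × (Fin n → ℝ),
          |f p.1 * f p.2 * ∑ i, p.1 i * p.2 i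
            - if |∑ i, p.1 i * p.2 i| ≤ τ then f p.1 * f p.2 * ∑ i, p.1 i * p.2 i else 0| ∂P := by
        simpa [Real.norm_eq_abs] using norm_integral_le_integral_norm
          (fun p : (Fin n → ℝ) × (Fin n → ℝ) =>
            f p.1 * f p.2 * ∑ i, p.1 i * p.2 i
              - if |∑ i, p.1 i * p.2 i| ≤ τ then f p.1 * f p.2 * ∑ i, p.1 i * p.2 i else 0)
          (μ := P)
    _ ≤ ∫ p, (C * Real.exp (m * ∑ i, p.1 i * p.2 i)
          + C * Real.exp (-m * ∑ i, p.1 i * p.2 i)) ∂P :=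
        integral_mono_of_nonneg (ae_of_all _ fun p => abs_nonneg _) hinth
          (ae_of_all _ hptfull)
    _ = 2 * C * ((Real.sqrt (1 - m ^ 2))⁻¹) ^ n := hinthval
    _ ≤ ε ^ 3 / 2 := hnum
end

section
/- Let x and y be independent standard normal random variables (each distributed as N(0,1)). Then for every real t with |t| < 1, the moment generating function of their product satisfies E[exp(t·x·y)] ≤ exp(t²/(2(1 − t²))). -/
open MeasureTheory ProbabilityTheory Real


lemma gauss_int_rw (g : ℝ → ℝ) :
    ∫ y, g y ∂(gaussianReal 0 1) = ∫ y, gaussianPDFReal 0 1 y * g y := by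
  rw [gaussianReal_of_var_ne_zero 0 one_ne_zero]
  have h : gaussianPDF 0 1 = fun y => ((gaussianPDFReal 0 1 y).toNNReal : ENNReal) := by
    ext y; rw [gaussianPDF_def]; rfl
  rw [h, integral_withDensity_eq_integral_smul
    ((measurable_gaussianPDFReal 0 1).real_toNNReal) g]
  congr 1; ext y
  simp [NNReal.smul_def, Real.coe_toNNReal _ (gaussianPDFReal_nonneg 0 1 y)]

lemma gauss_integrable_iff (g : ℝ → ℝ) :
    Integrable g (gaussianReal 0 1) ↔
      Integrable (fun y => g y * gaussianPDFReal 0 1 y) := by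
  rw [gaussianReal_of_var_ne_zero 0 one_ne_zero, gaussianPDF_def,
    integrable_withDensity_iff (measurable_gaussianPDFReal 0 1).ennreal_ofReal
      (Filter.Eventually.of_forall fun _ => ENNReal.ofReal_lt_top)]
  refine integrable_congr (Filter.Eventually.of_forall fun y => ?_)
  simp [ENNReal.toReal_ofReal (gaussianPDFReal_nonneg 0 1 y)]


lemma pdf_shift (c y : ℝ) :
    gaussianPDFReal 0 1 y * rexp (c * y) = rexp (c ^ 2 / 2) * gaussianPDFReal c 1 y := by
  simp only [gaussianPDFReal, NNReal.coe_one, mul_one, sub_zero]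
  have h2 : rexp (-y ^ 2 / 2) * rexp (c * y) = rexp (c ^ 2 / 2) * rexp (-(y - c) ^ 2 / 2) := by
    rw [← Real.exp_add, ← Real.exp_add]; congr 1; ring
  calc (√(2 * π))⁻¹ * rexp (-y ^ 2 / 2) * rexp (c * y)
      = (√(2 * π))⁻¹ * (rexp (-y ^ 2 / 2) * rexp (c * y)) := by ring
    _ = (√(2 * π))⁻¹ * (rexp (c ^ 2 / 2) * rexp (-(y - c) ^ 2 / 2)) := by rw [h2]
    _ = rexp (c ^ 2 / 2) * ((√(2 * π))⁻¹ * rexp (-(y - c) ^ 2 / 2)) := by ring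


lemma gauss_mgf (c : ℝ) :
    ∫ y, rexp (c * y) ∂(gaussianReal 0 1) = rexp (c ^ 2 / 2) := by
  rw [gauss_int_rw]
  simp_rw [pdf_shift c]
  rw [integral_const_mul, integral_gaussianPDFReal_eq_one c one_ne_zero, mul_one]

lemma gauss_mgf_integrable (c : ℝ) :
    Integrable (fun y => rexp (c * y)) (gaussianReal 0 1) := by
  rw [gauss_integrable_iff]
  have : (fun y => rexp (c * y) * gaussianPDFReal 0 1 y)
      = fun y => rexp (c ^ 2 / 2) * gaussianPDFReal c 1 y := by
    ext y; rw [mul_comm, pdf_shift]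
  rw [this]
  exact (integrable_gaussianPDFReal c 1).const_mul _

lemma pdf_sq (t x : ℝ) (h1 : (0:ℝ) < 1 - t ^ 2) :
    gaussianPDFReal 0 1 x * rexp (t ^ 2 * x ^ 2 / 2)
      = (√(2 * π))⁻¹ * rexp (-((1 - t ^ 2) / 2) * x ^ 2) := by
  simp only [gaussianPDFReal, NNReal.coe_one, mul_one, sub_zero]
  rw [mul_assoc, ← Real.exp_add]
  congr 1; ring

lemma gauss_sq_int (t : ℝ) (h1 : (0:ℝ) < 1 - t ^ 2) :
    ∫ x, rexp (t ^ 2 * x ^ 2 / 2) ∂(gaussianReal 0 1) = (√(1 - t ^ 2))⁻¹ := by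
  rw [gauss_int_rw]
  simp_rw [pdf_sq t _ h1]
  rw [integral_const_mul, integral_gaussian]
  rw [← Real.sqrt_inv, ← Real.sqrt_mul (by positivity)]
  rw [show (2 * π)⁻¹ * (π / ((1 - t ^ 2) / 2)) = (1 - t ^ 2)⁻¹ by
    field_simp]
  exact Real.sqrt_inv _

lemma gauss_sq_integrable (t : ℝ) (h1 : (0:ℝ) < 1 - t ^ 2) :
    Integrable (fun x => rexp (t ^ 2 * x ^ 2 / 2)) (gaussianReal 0 1) := by
  rw [gauss_integrable_iff]
  have : (fun x => rexp (t ^ 2 * x ^ 2 / 2) * gaussianPDFReal 0 1 x)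
      = fun x => (√(2 * π))⁻¹ * rexp (-((1 - t ^ 2) / 2) * x ^ 2) := by
    ext x; rw [mul_comm, pdf_sq t x h1]
  rw [this]
  exact (integrable_exp_neg_mul_sq (by linarith)).const_mul _

/-- For independent standard normal random variables `x, y` and `|t| < 1`,
`E[exp(t·x·y)] ≤ exp(t²/(2(1 − t²)))`. -/
theorem mgf_product_of_gaussians (t : ℝ) (ht : |t| < 1) :
    (∫ p : ℝ × ℝ, Real.exp (t * p.1 * p.2)
        ∂((gaussianReal 0 1).prod (gaussianReal 0 1))) ≤
      Real.exp (t ^ 2 / (2 * (1 - t ^ 2))) := by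
  have h1 : (0:ℝ) < 1 - t ^ 2 := by
    have := abs_nonneg t
    nlinarith [sq_abs t]
  have hmeas : AEStronglyMeasurable (fun p : ℝ × ℝ => rexp (t * p.1 * p.2))
      ((gaussianReal 0 1).prod (gaussianReal 0 1)) := by
    exact (Real.continuous_exp.comp (by fun_prop)).aestronglyMeasurable
  have hint : Integrable (fun p : ℝ × ℝ => rexp (t * p.1 * p.2))
      ((gaussianReal 0 1).prod (gaussianReal 0 1)) := by
    refine (integrable_prod_iff hmeas).2 ⟨?_, ?_⟩
    · filter_upwards with x
      simpa [mul_assoc] using gauss_mgf_integrable (t * x)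
    · have : (fun x => ∫ y, ‖rexp (t * x * y)‖ ∂(gaussianReal 0 1))
          = fun x => rexp (t ^ 2 * x ^ 2 / 2) := by
        ext x
        simp only [Real.norm_eq_abs, abs_of_pos (Real.exp_pos _)]
        rw [gauss_mgf (t * x)]
        congr 1; ring
      rw [this]
      exact gauss_sq_integrable t h1
  rw [integral_prod _ hint]
  have hstep : (∫ x, ∫ y, rexp (t * x * y) ∂(gaussianReal 0 1) ∂(gaussianReal 0 1))
      = (√(1 - t ^ 2))⁻¹ := by
    rw [← gauss_sq_int t h1]
    congr 1; ext x
    rw [gauss_mgf (t * x)]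
    congr 1; ring
  rw [hstep]
  -- final inequality
  have hkey : 1 / (1 - t ^ 2) ≤ rexp (t ^ 2 / (1 - t ^ 2)) := by
    have h2 := Real.add_one_le_exp (t ^ 2 / (1 - t ^ 2))
    have h3 : t ^ 2 / (1 - t ^ 2) + 1 = 1 / (1 - t ^ 2) := by field_simp; ring
    linarith
  have hsq : ((√(1 - t ^ 2))⁻¹) ^ 2 ≤ (rexp (t ^ 2 / (2 * (1 - t ^ 2)))) ^ 2 := by
    rw [inv_pow, Real.sq_sqrt h1.le, ← Real.exp_nat_mul,
      show ((2:ℕ):ℝ) * (t ^ 2 / (2 * (1 - t ^ 2))) = t ^ 2 / (1 - t ^ 2) by push_cast; rw [eq_div_iff h1.ne']; field_simp,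
      inv_eq_one_div]
    exact hkey
  have hl : (0:ℝ) ≤ (√(1 - t ^ 2))⁻¹ := by positivity
  calc (√(1 - t ^ 2))⁻¹ = √(((√(1 - t ^ 2))⁻¹) ^ 2) := (Real.sqrt_sq hl).symm
    _ ≤ √((rexp (t ^ 2 / (2 * (1 - t ^ 2)))) ^ 2) := Real.sqrt_le_sqrt hsq
    _ = rexp (t ^ 2 / (2 * (1 - t ^ 2))) := Real.sqrt_sq (Real.exp_pos _).le
end

section
/- For every constant c > 0 there exists n₀ such that for all n ≥ n₀ the following holds. Let q = ⌊(1/2)·log₂ n⌋ and let U be a set of ⌈n^c⌉ points drawn independently and uniformly at random from {0,1}ⁿ. Then with probability at least 3/4, for every subset S ⊆ U of size q and every y ∈ {0,1}^q, the fraction of coordinates i ∈ [n] such that the column of S indexed by i equals y is at most (6/5)·2^{−q}. -/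
open Finset Filter Real
lemma count_constrained {m n q : ℕ} (s : Fin q → Fin m) (hs : Function.Injective s)
    (y : Fin q → Bool) (R : Finset (Fin n)) :
    (univ.filter (fun u : Fin m → Fin n → Bool => ∀ i ∈ R, ∀ j, u (s j) i = y j)).card
      * 2 ^ (q * R.card) ≤ Fintype.card (Fin m → Fin n → Bool) := by
  classical
  have hcard : (univ : Finset (Fin q → (↥R : Type) → Bool)).card = 2 ^ (q * R.card) := by
    simp [Fintype.card_fun, Fintype.card_coe, pow_mul, pow_right_comm]
  set A := univ.filter (fun u : Fin m → Fin n → Bool => ∀ i ∈ R, ∀ j, u (s j) i = y j) with hA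
  rw [← hcard, ← Finset.card_product]
  rw [← Finset.card_univ]
  set F : (Fin m → Fin n → Bool) × (Fin q → (↥R : Type) → Bool) → (Fin m → Fin n → Bool) :=
    fun p a i => if h : (∃ j, s j = a) ∧ i ∈ R then p.2 h.1.choose ⟨i, h.2⟩ else p.1 a i with hF
  apply Finset.card_le_card_of_injOn F (fun _ _ => Finset.mem_univ _)
  rintro ⟨u, w⟩ hu ⟨u', w'⟩ hu' heq
  simp only [Finset.mem_coe, Finset.mem_product, hA, Finset.mem_filter, Finset.mem_univ,
    true_and] at hu hu'
  have key : ∀ (j : Fin q) (i : Fin n) (hi : i ∈ R) (p : (Fin m → Fin n → Bool) × (Fin q → (↥R : Type) → Bool)),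
      F p (s j) i = p.2 j ⟨i, hi⟩ := by
    intro j i hi p
    have hcond : (∃ j', s j' = s j) ∧ i ∈ R := ⟨⟨j, rfl⟩, hi⟩
    have : hcond.1.choose = j := hs hcond.1.choose_spec
    simp only [hF, dif_pos hcond, this]
  have hw : w = w' := by
    funext j i
    have h1 := key j i.1 i.2 (u, w)
    have h2 := key j i.1 i.2 (u', w')
    rw [heq] at h1
    exact h1.symm.trans h2
  have huu : u = u' := by
    funext a i
    by_cases h : (∃ j, s j = a) ∧ i ∈ R
    · obtain ⟨⟨j, hj⟩, hi⟩ := h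
      rw [← hj, hu.1 i hi j, hu'.1 i hi j]
    · have h1 : F (u, w) a i = u a i := dif_neg h
      have h2 : F (u', w') a i = u' a i := dif_neg h
      rw [← h1, ← h2, heq]
  rw [hw, huu]
lemma bad_card_bound {m n q : ℕ} (k r : ℕ) (s : Fin q → Fin m) (hs : Function.Injective s)
    (y : Fin q → Bool) :
    (univ.filter (fun u : Fin m → Fin n → Bool =>
        k ≤ (univ.filter (fun i : Fin n => ∀ j, u (s j) i = y j)).card)).card
      * (k.choose r * 2 ^ (q * r)) ≤ n.choose r * Fintype.card (Fin m → Fin n → Bool) := by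
  classical
  set cols : (Fin m → Fin n → Bool) → Finset (Fin n) :=
    fun u => univ.filter (fun i : Fin n => ∀ j, u (s j) i = y j) with hcols
  set B := univ.filter (fun u : Fin m → Fin n → Bool => k ≤ (cols u).card) with hB
  have stepA : B.card * k.choose r ≤ ∑ u ∈ B, ((cols u).powersetCard r).card := by
    rw [Finset.card_eq_sum_ones B, Finset.sum_mul, one_mul]
    apply Finset.sum_le_sum
    intro u hu
    rw [Finset.card_powersetCard]
    exact Nat.choose_le_choose r (Finset.mem_filter.mp hu).2
  have stepB : ∀ u, ((cols u).powersetCard r).card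
      = ∑ R ∈ (univ : Finset (Fin n)).powersetCard r, if R ⊆ cols u then 1 else 0 := by
    intro u
    have : (cols u).powersetCard r = ((univ : Finset (Fin n)).powersetCard r).filter
        (fun R => R ⊆ cols u) := by
      ext R
      simp only [Finset.mem_powersetCard, Finset.mem_filter, Finset.subset_univ, true_and]
      tauto
    rw [this, Finset.card_filter]
  have stepC : ∑ u ∈ B, ((cols u).powersetCard r).card
      ≤ ∑ R ∈ (univ : Finset (Fin n)).powersetCard r,
          (univ.filter (fun u : Fin m → Fin n → Bool => ∀ i ∈ R, ∀ j, u (s j) i = y j)).card := by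
    simp only [stepB]
    rw [Finset.sum_comm]
    apply Finset.sum_le_sum
    intro R _
    calc (∑ u ∈ B, if R ⊆ cols u then 1 else 0)
        ≤ ∑ u ∈ (univ : Finset (Fin m → Fin n → Bool)), if R ⊆ cols u then 1 else 0 :=
          Finset.sum_le_sum_of_subset (Finset.filter_subset _ _)
      _ = _ := by
          rw [← Finset.card_filter]
          congr 1
          ext u
          simp only [Finset.mem_filter, Finset.mem_univ, true_and, hcols,
            Finset.subset_iff, Finset.mem_filter]
  calc B.card * (k.choose r * 2 ^ (q * r))
      = (B.card * k.choose r) * 2 ^ (q * r) := by ring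
    _ ≤ (∑ R ∈ (univ : Finset (Fin n)).powersetCard r,
          (univ.filter (fun u : Fin m → Fin n → Bool => ∀ i ∈ R, ∀ j, u (s j) i = y j)).card)
            * 2 ^ (q * r) :=
        Nat.mul_le_mul_right _ (stepA.trans stepC)
    _ = ∑ R ∈ (univ : Finset (Fin n)).powersetCard r,
          (univ.filter (fun u : Fin m → Fin n → Bool => ∀ i ∈ R, ∀ j, u (s j) i = y j)).card
            * 2 ^ (q * r) := by rw [Finset.sum_mul]
    _ ≤ ∑ R ∈ (univ : Finset (Fin n)).powersetCard r, Fintype.card (Fin m → Fin n → Bool) := by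
        apply Finset.sum_le_sum
        intro R hR
        have hRc : R.card = r := (Finset.mem_powersetCard.mp hR).2
        calc _ = (univ.filter (fun u : Fin m → Fin n → Bool => ∀ i ∈ R, ∀ j, u (s j) i = y j)).card
              * 2 ^ (q * R.card) := by rw [hRc]
          _ ≤ _ := count_constrained s hs y R
    _ = n.choose r * Fintype.card (Fin m → Fin n → Bool) := by
        rw [Finset.sum_const, smul_eq_mul, Finset.card_powersetCard, Finset.card_univ,
          Fintype.card_fin]

lemma final_ineq (c : ℝ) (hc : 0 < c) : ∀ᶠ n : ℕ in Filter.atTop,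
    ((⌈(n:ℝ) ^ c⌉₊ : ℝ)) ^ (⌊(1/2:ℝ) * Real.logb 2 n⌋₊) * 2 ^ (⌊(1/2:ℝ) * Real.logb 2 n⌋₊)
      * ((20:ℝ)/23) ^ (n / (20 * 2 ^ (⌊(1/2:ℝ) * Real.logb 2 n⌋₊))) ≤ 1/4 := by
  set a := c / (2 * Real.log 2) with ha
  set t := Real.log (23/20) with ht
  have hlog2 : (0:ℝ) < Real.log 2 := Real.log_pos one_lt_two
  have hapos : 0 < a := div_pos hc (by linarith)
  have htpos : 0 < t := Real.log_pos (by norm_num)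
  have hsqrt_tendsto : Tendsto Real.sqrt atTop atTop := by
    have := tendsto_rpow_atTop (y := (1/2:ℝ)) (by norm_num)
    refine this.congr' ?_
    filter_upwards [eventually_ge_atTop (0:ℝ)] with x hx
    rw [Real.sqrt_eq_rpow]
  have H1 : ∀ᶠ x : ℝ in atTop, (Real.log x)^2 ≤ t/(80*(1+a)) * Real.sqrt x := by
    have h := isLittleO_log_rpow_atTop (show (0:ℝ) < 1/4 by norm_num)
    have h2 := h.mul h
    have hb := h2.bound (show (0:ℝ) < t/(80*(1+a)) by positivity)
    filter_upwards [hb, eventually_ge_atTop (1:ℝ)] with x hx hx1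
    have hx0 : (0:ℝ) < x := by linarith
    have heq : x ^ (1/4:ℝ) * x ^ (1/4:ℝ) = Real.sqrt x := by
      rw [← Real.rpow_add hx0, Real.sqrt_eq_rpow]; norm_num
    rw [heq] at hx
    have hlx : 0 ≤ Real.log x := Real.log_nonneg hx1
    have hsx : 0 ≤ Real.sqrt x := Real.sqrt_nonneg x
    calc (Real.log x)^2 = ‖Real.log x * Real.log x‖ := by
          rw [Real.norm_eq_abs, abs_of_nonneg (by positivity), sq]
      _ ≤ t/(80*(1+a)) * ‖Real.sqrt x‖ := hx
      _ = t/(80*(1+a)) * Real.sqrt x := by rw [Real.norm_eq_abs, abs_of_nonneg hsx]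
  have H2 : ∀ᶠ x : ℝ in atTop, 1 ≤ Real.log x := Real.tendsto_log_atTop.eventually_ge_atTop 1
  have H3 : ∀ᶠ x : ℝ in atTop, Real.log (23/20) ≤ (t/80) * Real.sqrt x :=
    (hsqrt_tendsto.const_mul_atTop (show (0:ℝ) < t/80 by positivity)).eventually_ge_atTop _
  have H4 : ∀ᶠ x : ℝ in atTop, Real.log 4 ≤ (t/40) * Real.sqrt x :=
    (hsqrt_tendsto.const_mul_atTop (show (0:ℝ) < t/40 by positivity)).eventually_ge_atTop _
  have Hall := (H1.and (H2.and (H3.and H4))).and (eventually_ge_atTop (1:ℝ))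
  have Hnat := tendsto_natCast_atTop_atTop (R := ℝ) |>.eventually Hall
  filter_upwards [Hnat] with n hn
  obtain ⟨⟨h1, h2, h3, h4⟩, hx1⟩ := hn
  set x : ℝ := (n:ℝ) with hxdef
  have hx0 : (0:ℝ) < x := by linarith
  set q : ℕ := ⌊(1/2:ℝ) * Real.logb 2 x⌋₊ with hqdef
  set Q : ℕ := 2 ^ q with hQdef
  set r : ℕ := n / (20 * Q) with hrdef
  have hlogb0 : (0:ℝ) ≤ (1/2:ℝ) * Real.logb 2 x := by
    have : 0 ≤ Real.logb 2 x := Real.logb_nonneg one_lt_two hx1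
    linarith
  have hq : (q:ℝ) ≤ (1/2) * Real.logb 2 x := Nat.floor_le hlogb0
  have hQx : ((2:ℝ))^q ≤ Real.sqrt x := by
    calc ((2:ℝ))^q = (2:ℝ) ^ ((q:ℕ):ℝ) := (Real.rpow_natCast 2 q).symm
      _ ≤ (2:ℝ) ^ ((1/2) * Real.logb 2 x) := Real.rpow_le_rpow_of_exponent_le one_le_two hq
      _ = ((2:ℝ) ^ (Real.logb 2 x)) ^ ((1/2:ℝ)) := by
          rw [← Real.rpow_mul (by norm_num : (0:ℝ) ≤ 2), mul_comm]
      _ = x ^ ((1/2):ℝ) := by rw [Real.rpow_logb two_pos (by norm_num) hx0]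
      _ = Real.sqrt x := (Real.sqrt_eq_rpow x).symm
  have hQ1 : (1:ℝ) ≤ (2:ℝ)^q := one_le_pow₀ one_le_two
  have hsx : 0 < Real.sqrt x := Real.sqrt_pos.mpr hx0
  have hxx : Real.sqrt x * Real.sqrt x = x := Real.mul_self_sqrt hx0.le
  have hlx : (0:ℝ) ≤ Real.log x := by linarith
  have hm : ((⌈x ^ c⌉₊ : ℕ):ℝ) ≤ 2 * x^c := by
    have hb1 : ((⌈x^c⌉₊:ℕ):ℝ) < x^c + 1 := Nat.ceil_lt_add_one (Real.rpow_nonneg hx0.le c)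
    have hb2 : (1:ℝ) ≤ x^c := Real.one_le_rpow hx1 hc.le
    linarith
  have hr : Real.sqrt x / 20 - 1 ≤ (r:ℝ) := by
    have hQpos : 0 < 20 * Q := by positivity
    have hlt : n < 20 * Q * (r + 1) := Nat.lt_mul_div_succ n hQpos
    have hltR : x < 20 * ((2:ℝ)^q) * ((r:ℝ) + 1) := by
      have := (Nat.cast_lt (α := ℝ)).mpr hlt
      push_cast [hQdef] at this
      convert this using 2
    have hle2 : x ≤ 20 * Real.sqrt x * ((r:ℝ) + 1) := by
      have hmm : 20 * ((2:ℝ)^q) * ((r:ℝ)+1) ≤ 20 * Real.sqrt x * ((r:ℝ)+1) :=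
        mul_le_mul_of_nonneg_right
          (mul_le_mul_of_nonneg_left hQx (by norm_num)) (by positivity)
      linarith
    have h5 : Real.sqrt x * Real.sqrt x ≤ (20*((r:ℝ)+1)) * Real.sqrt x := by
      rw [hxx]; linarith
    have h6 : Real.sqrt x ≤ 20*((r:ℝ)+1) := le_of_mul_le_mul_right (by linarith) hsx
    linarith
  have step1 : ((⌈x ^ c⌉₊ : ℕ):ℝ) ^ q * 2^q ≤ x * Real.exp (a * (Real.log x)^2) := by
    have e1 : ((⌈x ^ c⌉₊ : ℕ):ℝ) ^ q ≤ (2 * x^c)^q :=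
      pow_le_pow_left₀ (Nat.cast_nonneg _) hm q
    have e2 : (2 * x^c)^q * (2:ℝ)^q = ((2:ℝ)^q * (2:ℝ)^q) * (x^c)^q := by rw [mul_pow]; ring
    have e3 : ((2:ℝ)^q * (2:ℝ)^q) ≤ x := by
      have := mul_le_mul hQx hQx (le_trans zero_le_one hQ1) hsx.le
      rw [hxx] at this; exact this
    have e4 : ((x^c):ℝ)^q ≤ Real.exp (a * (Real.log x)^2) := by
      have e41 : ((x^c):ℝ)^q = x ^ (c * q) := by
        rw [← Real.rpow_natCast (x^c) q, ← Real.rpow_mul hx0.le]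
      rw [e41, Real.rpow_def_of_pos hx0]
      apply Real.exp_le_exp.mpr
      have hqb : (q:ℝ) ≤ Real.log x / (2 * Real.log 2) := by
        have hlb : Real.logb 2 x = Real.log x / Real.log 2 := Real.log_div_log.symm
        rw [hlb] at hq
        have hring : (1/2:ℝ) * (Real.log x / Real.log 2) = Real.log x/(2*Real.log 2) := by ring
        linarith
      calc Real.log x * (c * q) = (c * Real.log x) * (q:ℝ) := by ring
        _ ≤ (c * Real.log x) * (Real.log x/(2*Real.log 2)) :=
            mul_le_mul_of_nonneg_left hqb (by positivity)
        _ = a * (Real.log x)^2 := by rw [ha]; field_simp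
    have epos : (0:ℝ) ≤ (x^c)^q := by positivity
    calc ((⌈x ^ c⌉₊ : ℕ):ℝ) ^ q * 2^q ≤ (2 * x^c)^q * 2^q := by
          apply mul_le_mul_of_nonneg_right e1 (by positivity)
      _ = ((2:ℝ)^q * (2:ℝ)^q) * (x^c)^q := e2
      _ ≤ x * Real.exp (a * (Real.log x)^2) := by
          apply mul_le_mul e3 e4 epos hx0.le
  have hlog2023 : Real.log (20/23) = -t := by rw [ht, ← Real.log_inv]; norm_num
  have step2 : ((20:ℝ)/23)^r ≤ (23/20) * Real.exp (-(t/20) * Real.sqrt x) := by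
    calc ((20:ℝ)/23)^r = ((20:ℝ)/23) ^ ((r:ℕ):ℝ) := (Real.rpow_natCast _ r).symm
      _ ≤ ((20:ℝ)/23) ^ (Real.sqrt x/20 - 1) :=
          Real.rpow_le_rpow_of_exponent_ge (by norm_num) (by norm_num) hr
      _ = Real.exp (Real.log (20/23) * (Real.sqrt x/20 - 1)) :=
          Real.rpow_def_of_pos (by norm_num) _
      _ = Real.exp t * Real.exp (-(t/20) * Real.sqrt x) := by
          rw [hlog2023, ← Real.exp_add]; congr 1; ring
      _ = (23/20) * Real.exp (-(t/20) * Real.sqrt x) := by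
          rw [ht, Real.exp_log (by norm_num)]
  calc ((⌈x ^ c⌉₊ : ℕ):ℝ) ^ q * 2^q * ((20:ℝ)/23)^r
      ≤ (x * Real.exp (a * (Real.log x)^2)) * ((23/20) * Real.exp (-(t/20) * Real.sqrt x)) := by
        apply mul_le_mul step1 step2 (by positivity) (by positivity)
    _ = Real.exp (Real.log x + a * (Real.log x)^2 + Real.log (23/20) + (-(t/20) * Real.sqrt x)) := by
        rw [Real.exp_add, Real.exp_add, Real.exp_add, Real.exp_log hx0,
          Real.exp_log (by norm_num : (0:ℝ) < 23/20)]
        ring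
    _ ≤ Real.exp (-(Real.log 4)) := by
        apply Real.exp_le_exp.mpr
        have h1' : (1+a) * (Real.log x)^2 ≤ (t/80) * Real.sqrt x := by
          have := mul_le_mul_of_nonneg_left h1 (show (0:ℝ) ≤ 1 + a by linarith)
          calc (1+a) * (Real.log x)^2 ≤ (1+a) * (t/(80*(1+a)) * Real.sqrt x) := this
            _ = (t/80) * Real.sqrt x := by field_simp
        have h2' : Real.log x ≤ (Real.log x)^2 := by nlinarith [h2]
        rw [← ht] at h3
        linarith [h1', h2', h3, h4]
    _ = 1/4 := by
        rw [Real.exp_neg, Real.exp_log (by norm_num : (0:ℝ) < 4)]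
        norm_num

/-- For every `c > 0` and all large enough `n`, with `q = ⌊(1/2)·log₂ n⌋` and
`U` a tuple of `⌈n^c⌉` points drawn independently and uniformly from `{0,1}ⁿ`
(modeled by the uniform counting measure on `Fin m → Fin n → Bool`), with
probability at least `3/4`: for every subset `S ⊆ U` of size `q` (a `q`-tuple of
distinct points of `U`) and every `y ∈ {0,1}^q`, the fraction of coordinates
`i ∈ [n]` whose column in `S` equals `y` is at most `(6/5)·2^{−q}`. -/
theorem dictator_column_balance (c : ℝ) (hc : 0 < c) :
    ∃ n₀ : ℕ, ∀ n : ℕ, n₀ ≤ n →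
      (3 : ℝ) / 4 ≤
        (((Finset.univ.filter
            (fun u : Fin (⌈(n : ℝ) ^ c⌉₊) → Fin n → Bool =>
              ∀ s : Fin (⌊(1 / 2 : ℝ) * Real.logb 2 n⌋₊) → Fin (⌈(n : ℝ) ^ c⌉₊),
                Function.Injective s →
                  ∀ y : Fin (⌊(1 / 2 : ℝ) * Real.logb 2 n⌋₊) → Bool,
                    ((Finset.univ.filter
                        (fun i : Fin n => ∀ j, u (s j) i = y j)).card : ℝ) / n ≤
                      (6 : ℝ) / 5 / 2 ^ (⌊(1 / 2 : ℝ) * Real.logb 2 n⌋₊))).card : ℝ) /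
          (Fintype.card (Fin (⌈(n : ℝ) ^ c⌉₊) → Fin n → Bool) : ℝ)) := by
  classical
  obtain ⟨n₀, hn₀⟩ := eventually_atTop.mp ((final_ineq c hc).and (eventually_ge_atTop 1))
  refine ⟨n₀, fun n hn => ?_⟩
  obtain ⟨hfinal, hn1⟩ := hn₀ n hn
  have hn0 : 0 < n := hn1
  set M : ℕ := ⌈(n : ℝ) ^ c⌉₊ with hM
  set q : ℕ := ⌊(1 / 2 : ℝ) * Real.logb 2 n⌋₊ with hq
  set Q : ℕ := 2 ^ q with hQ
  set r : ℕ := n / (20 * Q) with hr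
  set k : ℕ := 6 * n / (5 * Q) + 1 with hk
  set N : ℕ := Fintype.card (Fin M → Fin n → Bool) with hN
  have hQpos : 0 < Q := Nat.pow_pos (by norm_num)
  have hNpos : 0 < N := Fintype.card_pos
  -- r ≤ k
  have hrk : r ≤ k := by
    have h1 : n / (20 * Q) ≤ n / (5 * Q) :=
      Nat.div_le_div_left (by omega) (by omega)
    have h2 : n / (5 * Q) ≤ 6 * n / (5 * Q) := Nat.div_le_div_right (by omega)
    omega
  have hkchoose : 0 < k.choose r := Nat.choose_pos hrk
  -- real facts
  have hxn : (0:ℝ) < (n:ℝ) := by exact_mod_cast hn0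
  have hQR : (0:ℝ) < (Q:ℝ) := by exact_mod_cast hQpos
  have hkR : (6:ℝ) * n / (5 * Q) < (k:ℝ) := by
    have := Nat.lt_mul_div_succ (6 * n) (show 0 < 5 * Q by omega)
    have hcast : ((6 * n : ℕ):ℝ) < ((5 * Q : ℕ):ℝ) * (((6 * n / (5 * Q) : ℕ) : ℝ) + 1) := by
      exact_mod_cast this
    push_cast at hcast ⊢
    rw [div_lt_iff₀ (by positivity)]
    push_cast [hk]
    linarith
  have hrR : (r:ℝ) ≤ (n:ℝ) / (20 * Q) := by
    have h := Nat.cast_div_le (α := ℝ) (m := n) (n := 20 * Q)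
    push_cast at h
    exact h
  -- P3 : n ≤ (20/23) Q (k+1-r)
  have hP3 : (n:ℝ) ≤ (20/23) * (Q:ℝ) * (((k + 1 - r : ℕ)):ℝ) := by
    have hsub : ((k + 1 - r : ℕ):ℝ) = (k:ℝ) + 1 - r := by
      have : r ≤ k + 1 := by omega
      push_cast [Nat.cast_sub this]
      ring
    rw [hsub]
    have e1 : (6:ℝ) * n / 5 < (Q:ℝ) * k := by
      have e0 : (Q:ℝ) * ((6:ℝ)*n/(5*Q)) = 6*n/5 := by field_simp
      calc (6:ℝ)*n/5 = (Q:ℝ) * ((6:ℝ)*n/(5*Q)) := e0.symm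
        _ < (Q:ℝ) * k := mul_lt_mul_of_pos_left hkR hQR
    have e2 : (Q:ℝ) * r ≤ n / 20 := by
      have := mul_le_mul_of_nonneg_left hrR hQR.le
      calc (Q:ℝ) * r ≤ Q * ((n:ℝ)/(20*Q)) := this
        _ = n / 20 := by field_simp
    nlinarith [hQR]
  -- P4 : choose ratio
  have hP4 : (n.choose r : ℝ) ≤ (20/23)^r * (k.choose r) * 2^(q*r) := by
    have c1 : (n.choose r : ℝ) ≤ (n:ℝ)^r / r.factorial := Nat.choose_le_pow_div r n
    have c2 : (((k + 1 - r : ℕ))^r : ℝ) / r.factorial ≤ (k.choose r : ℝ) := by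
      have := Nat.pow_le_choose (α := ℝ) r k
      convert this using 3
    have c3 : ((n:ℝ))^r ≤ ((20/23) * (Q:ℝ) * (((k + 1 - r : ℕ)):ℝ))^r :=
      pow_le_pow_left₀ hxn.le hP3 r
    have c4 : ((20/23) * (Q:ℝ) * (((k + 1 - r : ℕ)):ℝ))^r
        = (20/23)^r * 2^(q*r) * (((k + 1 - r : ℕ):ℝ))^r := by
      rw [mul_pow, mul_pow, pow_mul]
      push_cast [hQ]
      ring
    have hfact : (0:ℝ) < r.factorial := by exact_mod_cast r.factorial_pos
    calc (n.choose r : ℝ) ≤ (n:ℝ)^r / r.factorial := c1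
      _ ≤ ((20/23)^r * 2^(q*r) * (((k + 1 - r : ℕ):ℝ))^r) / r.factorial := by
          gcongr
          exact c3.trans_eq c4
      _ = (20/23)^r * 2^(q*r) * ((((k + 1 - r : ℕ):ℝ))^r / r.factorial) := by ring
      _ ≤ (20/23)^r * 2^(q*r) * (k.choose r : ℝ) := by
          apply mul_le_mul_of_nonneg_left c2 (by positivity)
      _ = (20/23)^r * (k.choose r) * 2^(q*r) := by ring
  -- the bad set and union bound
  set P : (Fin M → Fin n → Bool) → Prop := fun u =>
    ∀ s : Fin q → Fin M, Function.Injective s → ∀ y : Fin q → Bool,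
      ((Finset.univ.filter (fun i : Fin n => ∀ j, u (s j) i = y j)).card : ℝ) / n ≤
        (6 : ℝ) / 5 / 2 ^ q with hP
  set pairs : Finset ((Fin q → Fin M) × (Fin q → Bool)) :=
    (Finset.univ.filter (fun s => Function.Injective s)) ×ˢ Finset.univ with hpairs
  set Bset : ((Fin q → Fin M) × (Fin q → Bool)) → Finset (Fin M → Fin n → Bool) :=
    fun p => Finset.univ.filter (fun u =>
      k ≤ (Finset.univ.filter (fun i : Fin n => ∀ j, u (p.1 j) i = p.2 j)).card) with hBset
  have hsubset : Finset.univ.filter (fun u => ¬ P u) ⊆ pairs.biUnion Bset := by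
    intro u hu
    rw [Finset.mem_filter] at hu
    obtain ⟨-, hu⟩ := hu
    simp only [hP] at hu
    push_neg at hu
    obtain ⟨s, hsinj, y, hy⟩ := hu
    rw [Finset.mem_biUnion]
    refine ⟨(s, y), ?_, ?_⟩
    · rw [hpairs, Finset.mem_product]
      exact ⟨Finset.mem_filter.mpr ⟨Finset.mem_univ _, hsinj⟩, Finset.mem_univ _⟩
    · rw [hBset, Finset.mem_filter]
      refine ⟨Finset.mem_univ _, ?_⟩
      -- from ¬ (count/n ≤ 6/5/2^q) deduce k ≤ count
      set cnt := (Finset.univ.filter (fun i : Fin n => ∀ j, u (s j) i = y j)).card with hcnt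
      have hgt : (6:ℝ)/5/2^q < (cnt:ℝ)/n := hy
      have hgt2 : (6:ℝ) * n / (5 * Q) < (cnt:ℝ) := by
        rw [div_lt_div_iff₀ (by positivity) hxn] at hgt
        rw [div_lt_iff₀ (by positivity)]
        push_cast [hQ]
        linarith
      have hnat : 6 * n / (5 * Q) < cnt := by
        have hle : ((6 * n / (5 * Q) : ℕ):ℝ) ≤ (6:ℝ) * n / (5 * Q) := by
          have := Nat.cast_div_le (α := ℝ) (m := 6 * n) (n := 5 * Q)
          push_cast at this
          linarith
        exact_mod_cast hle.trans_lt hgt2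
      omega
  have hcardBad : ((Finset.univ.filter (fun u => ¬ P u)).card : ℝ)
      ≤ (M^q * 2^q : ℝ) * ((n.choose r : ℝ) * N / ((k.choose r : ℝ) * 2^(q*r))) := by
    have hDpos : (0:ℝ) < (k.choose r : ℝ) * 2^(q*r) := by positivity
    have hone : ∀ p ∈ pairs, ((Bset p).card : ℝ)
        ≤ (n.choose r : ℝ) * N / ((k.choose r : ℝ) * 2^(q*r)) := by
      intro p hp
      rw [hpairs, Finset.mem_product, Finset.mem_filter] at hp
      have hinj : Function.Injective p.1 := hp.1.2
      rw [le_div_iff₀ hDpos]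
      exact_mod_cast bad_card_bound (n := n) k r p.1 hinj p.2
    calc ((Finset.univ.filter (fun u => ¬ P u)).card : ℝ)
        ≤ ((pairs.biUnion Bset).card : ℝ) := by
          exact_mod_cast Finset.card_le_card hsubset
      _ ≤ (∑ p ∈ pairs, (Bset p).card : ℕ) := by exact_mod_cast Finset.card_biUnion_le
      _ = ∑ p ∈ pairs, ((Bset p).card : ℝ) := by push_cast; ring
      _ ≤ pairs.card • ((n.choose r : ℝ) * N / ((k.choose r : ℝ) * 2^(q*r))) :=
          Finset.sum_le_card_nsmul pairs _ _ hone
      _ ≤ (M^q * 2^q : ℝ) * ((n.choose r : ℝ) * N / ((k.choose r : ℝ) * 2^(q*r))) := by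
          rw [nsmul_eq_mul]
          apply mul_le_mul_of_nonneg_right _ (by positivity)
          have hc1 : pairs.card ≤ M^q * 2^q := by
            rw [hpairs, Finset.card_product]
            apply Nat.mul_le_mul
            · calc (Finset.univ.filter (fun s : Fin q → Fin M => Function.Injective s)).card
                  ≤ (Finset.univ : Finset (Fin q → Fin M)).card :=
                    Finset.card_le_card (Finset.filter_subset _ _)
                _ = M^q := by rw [Finset.card_univ, Fintype.card_fun]; simp
            · rw [Finset.card_univ, Fintype.card_fun]
              simp
          exact_mod_cast hc1
  -- combine with hP4 and hfinal
  have hquarter : ((Finset.univ.filter (fun u => ¬ P u)).card : ℝ) ≤ (N:ℝ) / 4 := by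
    have hDpos : (0:ℝ) < (k.choose r : ℝ) * 2^(q*r) := by positivity
    have hstep : (n.choose r : ℝ) * N / ((k.choose r : ℝ) * 2^(q*r)) ≤ (20/23)^r * N := by
      rw [div_le_iff₀ hDpos]
      calc (n.choose r : ℝ) * N ≤ ((20/23)^r * (k.choose r) * 2^(q*r)) * N :=
            mul_le_mul_of_nonneg_right hP4 (by positivity)
        _ = (20/23)^r * N * ((k.choose r : ℝ) * 2^(q*r)) := by ring
    calc ((Finset.univ.filter (fun u => ¬ P u)).card : ℝ)
        ≤ (M^q * 2^q : ℝ) * ((n.choose r : ℝ) * N / ((k.choose r : ℝ) * 2^(q*r))) := hcardBad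
      _ ≤ (M^q * 2^q : ℝ) * ((20/23)^r * N) := by
          apply mul_le_mul_of_nonneg_left hstep (by positivity)
      _ = ((M:ℝ)^q * 2^q * (20/23)^r) * N := by ring
      _ ≤ (1/4) * N := by
          apply mul_le_mul_of_nonneg_right _ (by positivity)
          exact_mod_cast hfinal
      _ = (N:ℝ)/4 := by ring
  -- conclude
  have hsplit := Finset.card_filter_add_card_filter_not
    (s := (Finset.univ : Finset (Fin M → Fin n → Bool))) (p := P)
  have hNcard : (Finset.univ : Finset (Fin M → Fin n → Bool)).card = N := Finset.card_univ
  have hNR : (0:ℝ) < (N:ℝ) := by exact_mod_cast hNpos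
  have hgood : ((Finset.univ.filter P).card : ℝ)
      = (N:ℝ) - ((Finset.univ.filter (fun u => ¬ P u)).card : ℝ) := by
    rw [hNcard] at hsplit
    have h2 := congrArg (fun z : ℕ => (z:ℝ)) hsplit
    push_cast at h2
    linarith
  rw [le_div_iff₀ hNR, hgood]
  linarith
end
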